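/- Let $A_1, A_2$ be $N \times N$ complex matrices with $\|A_1\|, \|A_2\| \leq M$. Then the Hausdorff distance between the spectra of $A_1$ and $A_2$ is bounded by $C \|A_1 - A_2\|^{1/N}$, where $C$ depends only on $N$ and $M$. -/

import Mathlib

open Polynomial Matrix Finset

/-- Operator norm of a complex matrix acting on Euclidean space. -/
noncomputable def opNorm {N : ℕ} (M : Matrix (Fin N) (Fin N) ℂ) : ℝ :=
  ‖Matrix.toEuclideanCLM (𝕜 := ℂ) M‖

namespace Stmt12Aux

variable {N : ℕ}

lemma evalCharpoly (A : Matrix (Fin N) (Fin N) ℂ) (μ : ℂ) :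
    A.charpoly.eval μ = (μ • (1 : Matrix (Fin N) (Fin N) ℂ) - A).det := by
  rw [Matrix.charpoly, ← Polynomial.coe_evalRingHom, RingHom.map_det]
  congr 1
  ext i j
  by_cases h : i = j <;>
    simp [h, charmatrix_apply, Matrix.one_apply, Matrix.diagonal_apply, Matrix.smul_apply]

lemma memSpectrumIffDet (A : Matrix (Fin N) (Fin N) ℂ) (μ : ℂ) :
    μ ∈ spectrum ℂ A ↔ (μ • (1 : Matrix (Fin N) (Fin N) ℂ) - A).det = 0 := by
  rw [spectrum.mem_iff, Algebra.algebraMap_eq_smul_one, Matrix.isUnit_iff_isUnit_det,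
    isUnit_iff_ne_zero, not_not]

lemma memSpectrumIffRoot (A : Matrix (Fin N) (Fin N) ℂ) (μ : ℂ) :
    μ ∈ spectrum ℂ A ↔ A.charpoly.eval μ = 0 := by
  rw [memSpectrumIffDet, evalCharpoly]

lemma coordLeNorm (x : EuclideanSpace ℂ (Fin N)) (i : Fin N) : ‖x i‖ ≤ ‖x‖ := by
  rw [EuclideanSpace.norm_eq]
  have h1 : ‖x i‖ = Real.sqrt (‖x i‖ ^ 2) := (Real.sqrt_sq (norm_nonneg _)).symm
  rw [h1]
  exact Real.sqrt_le_sqrt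
    (Finset.single_le_sum (f := fun j => ‖x j‖ ^ 2) (fun j _ => sq_nonneg _) (mem_univ i))

noncomputable def detColsFun (N : ℕ) (m : Fin N → EuclideanSpace ℂ (Fin N)) : ℂ :=
  (Matrix.of fun i j => m j i).det

lemma detColsFun_update [DecidableEq (Fin N)] (m : Fin N → EuclideanSpace ℂ (Fin N)) (k : Fin N)
    (z : EuclideanSpace ℂ (Fin N)) :
    detColsFun N (Function.update m k z) =
      ((Matrix.of fun i j => m j i).updateCol k (fun i => z i)).det := by
  unfold detColsFun
  congr 1
  ext i j
  simp only [Matrix.of_apply, Matrix.updateCol_apply, Function.update_apply]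
  split_ifs <;> rfl

noncomputable def detCols (N : ℕ) :
    MultilinearMap ℂ (fun _ : Fin N => EuclideanSpace ℂ (Fin N)) ℂ where
  toFun := detColsFun N
  map_update_add' := by
    intro inst m k x y
    rw [@detColsFun_update N inst m k (x + y), @detColsFun_update N inst m k x,
      @detColsFun_update N inst m k y]
    have hxy : (fun i => (x + y : EuclideanSpace ℂ (Fin N)) i)
        = (fun i => x i) + fun i => y i := rfl
    rw [hxy]
    exact Matrix.det_updateCol_add _ k (fun i => x i) (fun i => y i)
  map_update_smul' := by
    intro inst m k c x
    rw [@detColsFun_update N inst m k (c • x), @detColsFun_update N inst m k x]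
    have hcx : (fun i => (c • x : EuclideanSpace ℂ (Fin N)) i)
        = c • fun i => x i := rfl
    rw [hcx]
    exact Matrix.det_updateCol_smul _ k c (fun i => x i)

lemma detCols_bound (m : ∀ _ : Fin N, EuclideanSpace ℂ (Fin N)) :
    ‖detCols N m‖ ≤ (N.factorial : ℝ) * ∏ i, ‖m i‖ := by
  have hdef : detCols N m = ∑ σ : Equiv.Perm (Fin N),
      ((Equiv.Perm.sign σ : ℤ) : ℂ) * ∏ i, (Matrix.of fun i j => m j i) (σ i) i := by
    show (Matrix.of fun i j => m j i).det = _
    exact Matrix.det_apply' _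
  rw [hdef]
  calc ‖∑ σ : Equiv.Perm (Fin N), ((Equiv.Perm.sign σ : ℤ) : ℂ) *
        ∏ i, (Matrix.of fun i j => m j i) (σ i) i‖
      ≤ ∑ σ : Equiv.Perm (Fin N), ‖((Equiv.Perm.sign σ : ℤ) : ℂ) *
        ∏ i, (Matrix.of fun i j => m j i) (σ i) i‖ := norm_sum_le _ _
    _ ≤ ∑ _σ : Equiv.Perm (Fin N), ∏ i, ‖m i‖ := by
        apply Finset.sum_le_sum
        intro σ _
        rw [norm_mul]
        have hsign : ‖((Equiv.Perm.sign σ : ℤ) : ℂ)‖ = 1 := by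
          rcases Int.units_eq_one_or (Equiv.Perm.sign σ) with h | h <;> simp [h]
        rw [hsign, one_mul, norm_prod]
        exact Finset.prod_le_prod (fun i _ => norm_nonneg _)
          (fun i _ => coordLeNorm (m i) (σ i))
    _ = (N.factorial : ℝ) * ∏ i, ‖m i‖ := by
        rw [Finset.sum_const, Finset.card_univ, Fintype.card_perm, Fintype.card_fin,
          nsmul_eq_mul]

lemma multiset_pow_le_prod (s : Multiset ℝ) (c : ℝ) (hc : 0 ≤ c)
    (h : ∀ x ∈ s, c ≤ x) : c ^ Multiset.card s ≤ s.prod := by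
  induction s using Multiset.induction with
  | empty => simp
  | cons a t ih =>
    have ha : c ≤ a := h a (Multiset.mem_cons_self a t)
    have ht : ∀ x ∈ t, c ≤ x := fun x hx => h x (Multiset.mem_cons_of_mem hx)
    rw [Multiset.card_cons, Multiset.prod_cons, pow_succ, mul_comm a t.prod]
    exact mul_le_mul (ih ht) ha hc (le_trans (pow_nonneg hc _) (ih ht))

lemma col_apply (B : Matrix (Fin N) (Fin N) ℂ) (j i : Fin N) :
    (Matrix.toEuclideanCLM (𝕜 := ℂ) B (EuclideanSpace.single j 1)) i = B i j := by
  rw [Matrix.ofLp_toEuclideanCLM]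
  simp [Matrix.toLin'_apply, Matrix.mulVec_single]

lemma det_eq_detColsFun (B : Matrix (Fin N) (Fin N) ℂ) :
    B.det = detColsFun N
      (fun j => Matrix.toEuclideanCLM (𝕜 := ℂ) B (EuclideanSpace.single j (1 : ℂ))) := by
  unfold detColsFun
  congr 1
  ext i j
  exact (col_apply B j i).symm

end Stmt12Aux

namespace Stmt12Aux

lemma opNorm_sub_comm (A₁ A₂ : Matrix (Fin N) (Fin N) ℂ) :
    opNorm (A₂ - A₁) = opNorm (A₁ - A₂) := by
  unfold opNorm
  rw [show A₂ - A₁ = -(A₁ - A₂) by rw [neg_sub], map_neg, norm_neg]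

set_option maxHeartbeats 1000000 in
set_option synthInstance.maxHeartbeats 400000 in
lemma one_sided (N : ℕ) (hN : 1 ≤ N) (M : ℝ) (hM : 0 < M)
    (A₁ A₂ : Matrix (Fin N) (Fin N) ℂ) (h₁ : opNorm A₁ ≤ M) (h₂ : opNorm A₂ ≤ M)
    (ν : ℂ) (hν : ν ∈ spectrum ℂ A₂) :
    ∃ μ ∈ spectrum ℂ A₁, ‖ν - μ‖ ≤
      max ((N.factorial : ℝ) * N * (2 * M) ^ (N - 1)) 1 * opNorm (A₁ - A₂) ^ ((1:ℝ)/N) := by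
  haveI : Nonempty (Fin N) := ⟨⟨0, hN⟩⟩
  haveI : Nontrivial (EuclideanSpace ℂ (Fin N)) := by
    refine nontrivial_of_ne (EuclideanSpace.single ⟨0, hN⟩ (1 : ℂ)) 0 (fun h => ?_)
    have := congrArg norm h
    simp [EuclideanSpace.norm_single] at this
  set f := Matrix.toEuclideanCLM (𝕜 := ℂ) (n := Fin N) with hf
  set K0 : ℝ := (N.factorial : ℝ) * N * (2 * M) ^ (N - 1) with hK0def
  have hK0 : 0 ≤ K0 := by positivity
  set ε : ℝ := opNorm (A₁ - A₂) with hεdef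
  have hε0 : 0 ≤ ε := norm_nonneg _
  have hNpos : (0:ℝ) < N := by exact_mod_cast hN
  -- ‖ν‖ ≤ M
  have hνM : ‖ν‖ ≤ M := by
    have hmem : ν ∈ spectrum ℂ (f A₂) := by rw [AlgEquiv.spectrum_eq]; exact hν
    exact (spectrum.norm_le_norm_of_mem hmem).trans h₂
  -- the columns
  set e : Fin N → EuclideanSpace ℂ (Fin N) := fun j => EuclideanSpace.single j (1 : ℂ) with he
  set m₁ : ∀ _ : Fin N, EuclideanSpace ℂ (Fin N) :=
    fun j => f (ν • (1 : Matrix (Fin N) (Fin N) ℂ) - A₁) (e j) with hm₁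
  set m₂ : ∀ _ : Fin N, EuclideanSpace ℂ (Fin N) :=
    fun j => f (ν • (1 : Matrix (Fin N) (Fin N) ℂ) - A₂) (e j) with hm₂
  have hcol : ∀ (A : Matrix (Fin N) (Fin N) ℂ), opNorm A ≤ M →
      ‖(fun j => f (ν • (1 : Matrix (Fin N) (Fin N) ℂ) - A) (e j) :
        ∀ _ : Fin N, EuclideanSpace ℂ (Fin N))‖ ≤ 2 * M := by
    intro A hA
    rw [pi_norm_le_iff_of_nonneg (by positivity)]
    intro j
    have h1 : ‖f (ν • (1 : Matrix (Fin N) (Fin N) ℂ) - A) (e j)‖ ≤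
        ‖f (ν • (1 : Matrix (Fin N) (Fin N) ℂ) - A)‖ := by
      calc ‖f (ν • (1 : Matrix (Fin N) (Fin N) ℂ) - A) (e j)‖
          ≤ ‖f (ν • (1 : Matrix (Fin N) (Fin N) ℂ) - A)‖ * ‖e j‖ :=
            ContinuousLinearMap.le_opNorm _ _
        _ = _ := by rw [he, EuclideanSpace.norm_single, norm_one, mul_one]
    refine h1.trans ?_
    have h2 : f (ν • (1 : Matrix (Fin N) (Fin N) ℂ) - A) = ν • f 1 - f A := by
      rw [map_sub, _root_.map_smul]
    rw [h2]
    calc ‖ν • f 1 - f A‖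
        ≤ ‖ν • f 1‖ + ‖f A‖ := norm_sub_le _ _
      _ ≤ ‖ν‖ * 1 + M := by
          have hs : ‖ν • f 1‖ = ‖ν‖ * ‖f 1‖ := norm_smul ν (f 1)
          have ho : ‖f (1 : Matrix (Fin N) (Fin N) ℂ)‖ = 1 := by rw [_root_.map_one]; exact norm_one
          rw [hs, ho]
          exact add_le_add le_rfl hA
      _ ≤ 2 * M := by rw [mul_one]; linarith
  have hmax : max ‖m₁‖ ‖m₂‖ ≤ 2 * M := max_le (hcol A₁ h₁) (hcol A₂ h₂)
  have hdiff : ‖m₁ - m₂‖ ≤ ε := by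
    rw [pi_norm_le_iff_of_nonneg hε0]
    intro j
    have h1 : (m₁ - m₂) j = f (A₂ - A₁) (e j) := by
      have : f (ν • (1 : Matrix (Fin N) (Fin N) ℂ) - A₁) -
          f (ν • (1 : Matrix (Fin N) (Fin N) ℂ) - A₂) = f (A₂ - A₁) := by
        rw [← map_sub, sub_sub_sub_cancel_left]
      calc (m₁ - m₂) j = m₁ j - m₂ j := rfl
        _ = (f (ν • (1 : Matrix (Fin N) (Fin N) ℂ) - A₁) -
            f (ν • (1 : Matrix (Fin N) (Fin N) ℂ) - A₂)) (e j) := rfl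
        _ = f (A₂ - A₁) (e j) := by rw [this]
    rw [h1]
    calc ‖f (A₂ - A₁) (e j)‖ ≤ ‖f (A₂ - A₁)‖ * ‖e j‖ := ContinuousLinearMap.le_opNorm _ _
      _ = opNorm (A₂ - A₁) := by
          rw [he]
          rw [EuclideanSpace.norm_single, norm_one, mul_one]
          rfl
      _ = ε := by rw [opNorm_sub_comm]
  -- the evaluation bound
  have hdet₂ : (ν • (1 : Matrix (Fin N) (Fin N) ℂ) - A₂).det = 0 :=
    (memSpectrumIffDet A₂ ν).1 hν
  have heval : ‖A₁.charpoly.eval ν‖ ≤ K0 * ε := by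
    have h0 : A₁.charpoly.eval ν = detCols N m₁ - detCols N m₂ := by
      rw [evalCharpoly]
      have e₁ : (ν • (1 : Matrix (Fin N) (Fin N) ℂ) - A₁).det = detCols N m₁ :=
        det_eq_detColsFun _
      have e₂ : (ν • (1 : Matrix (Fin N) (Fin N) ℂ) - A₂).det = detCols N m₂ :=
        det_eq_detColsFun _
      rw [e₁, ← e₂, hdet₂, sub_zero]
    rw [h0]
    have hb := (detCols N).norm_image_sub_le_of_bound (C := (N.factorial : ℝ))
      (by positivity) detCols_bound m₁ m₂
    refine hb.trans ?_
    rw [hK0def]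
    have hcard : (Fintype.card (Fin N) : ℝ) = (N : ℝ) := by rw [Fintype.card_fin]
    rw [Fintype.card_fin]
    have hmax0 : (0:ℝ) ≤ max ‖m₁‖ ‖m₂‖ := le_max_of_le_left (norm_nonneg _)
    gcongr
  -- roots of the characteristic polynomial
  set p : ℂ[X] := A₁.charpoly with hp
  have hp_monic : p.Monic := A₁.charpoly_monic
  have hdeg : p.natDegree = N := by
    rw [hp, Matrix.charpoly_natDegree_eq_dim, Fintype.card_fin]
  have hsplit : p.Splits := IsAlgClosed.splits p
  have hcard : Multiset.card p.roots = N := by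
    rw [Polynomial.splits_iff_card_roots.mp hsplit, hdeg]
  have hfac : p = (p.roots.map fun a => X - C a).prod :=
    hsplit.eq_prod_roots_of_monic hp_monic
  have heval_prod : ‖p.eval ν‖ = ((p.roots.map fun a => ‖ν - a‖)).prod := by
    conv_lhs => rw [hfac]
    rw [Polynomial.eval_multiset_prod, Multiset.map_map]
    rw [show ‖(p.roots.map (Polynomial.eval ν ∘ fun a => X - C a)).prod‖ =
        ((p.roots.map (Polynomial.eval ν ∘ fun a => X - C a)).map norm).prod from
      map_multiset_prod (⟨⟨(norm : ℂ → ℝ), norm_one⟩, norm_mul⟩ : ℂ →* ℝ) _]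
    rw [Multiset.map_map]
    congr 1
    apply Multiset.map_congr rfl
    intro a _
    simp
  -- choose the closest root
  have hroots_ne : p.roots ≠ 0 := by
    intro h
    rw [h] at hcard
    simp at hcard
    omega
  obtain ⟨μ₀, hμ₀mem, hmin⟩ := p.roots.toFinset.exists_min_image
    (fun a => ‖ν - a‖) (by rwa [Multiset.toFinset_nonempty])
  have hμ₀roots : μ₀ ∈ p.roots := Multiset.mem_toFinset.mp hμ₀mem
  have hμ₀root : p.eval μ₀ = 0 := (Polynomial.mem_roots hp_monic.ne_zero).mp hμ₀roots
  have hμ₀spec : μ₀ ∈ spectrum ℂ A₁ := (memSpectrumIffRoot _ _).mpr hμ₀root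
  refine ⟨μ₀, hμ₀spec, ?_⟩
  -- the power bound
  have hcN : ‖ν - μ₀‖ ^ N ≤ K0 * ε := by
    have h1 : ‖ν - μ₀‖ ^ N ≤ ((p.roots.map fun a => ‖ν - a‖)).prod := by
      have := multiset_pow_le_prod (p.roots.map fun a => ‖ν - a‖) ‖ν - μ₀‖
        (norm_nonneg _) ?_
      · rwa [Multiset.card_map, hcard] at this
      · intro x hx
        obtain ⟨a, ha, rfl⟩ := Multiset.mem_map.mp hx
        exact hmin a (Multiset.mem_toFinset.mpr ha)
    rw [← heval_prod] at h1
    exact h1.trans heval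
  -- conclude via rpow
  have h1N : (0:ℝ) < 1 / N := by positivity
  have h1 : ‖ν - μ₀‖ ≤ (K0 * ε) ^ ((1:ℝ)/N) := by
    rw [one_div]
    have h := Real.rpow_le_rpow (by positivity) hcN
      (by positivity : (0:ℝ) ≤ ((N:ℝ))⁻¹)
    rwa [Real.pow_rpow_inv_natCast (norm_nonneg _) (by omega)] at h
  have h2 : (K0 * ε) ^ ((1:ℝ)/N) = K0 ^ ((1:ℝ)/N) * ε ^ ((1:ℝ)/N) := Real.mul_rpow hK0 hε0
  have h3 : K0 ^ ((1:ℝ)/N) ≤ max K0 1 := by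
    rcases le_total K0 1 with h | h
    · exact (Real.rpow_le_one hK0 h h1N.le).trans (le_max_right _ _)
    · refine le_trans ?_ (le_max_left _ _)
      have := Real.rpow_le_rpow_of_exponent_le h
        (by rw [div_le_one hNpos]; exact_mod_cast hN : (1:ℝ)/N ≤ 1)
      simpa using this
  calc ‖ν - μ₀‖ ≤ (K0 * ε) ^ ((1:ℝ)/N) := h1
    _ = K0 ^ ((1:ℝ)/N) * ε ^ ((1:ℝ)/N) := h2
    _ ≤ max K0 1 * ε ^ ((1:ℝ)/N) :=
        mul_le_mul_of_nonneg_right h3 (Real.rpow_nonneg hε0 _)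

end Stmt12Aux

theorem stmt12 (N : ℕ) (hN : 1 ≤ N) (M : ℝ) (hM : 0 < M) :
    ∃ C > 0, ∀ (A₁ A₂ : Matrix (Fin N) (Fin N) ℂ),
      opNorm A₁ ≤ M → opNorm A₂ ≤ M →
      (∀ μ ∈ spectrum ℂ A₁, ∃ ν ∈ spectrum ℂ A₂,
          ‖μ - ν‖ ≤ C * opNorm (A₁ - A₂) ^ ((1:ℝ) / N)) ∧
      (∀ ν ∈ spectrum ℂ A₂, ∃ μ ∈ spectrum ℂ A₁,
          ‖ν - μ‖ ≤ C * opNorm (A₁ - A₂) ^ ((1:ℝ) / N)) := by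
  refine ⟨max ((N.factorial : ℝ) * N * (2 * M) ^ (N - 1)) 1,
    lt_of_lt_of_le one_pos (le_max_right _ _), fun A₁ A₂ h₁ h₂ => ⟨?_, ?_⟩⟩
  · intro μ hμ
    obtain ⟨ν, hν, hle⟩ := Stmt12Aux.one_sided N hN M hM A₂ A₁ h₂ h₁ μ hμ
    refine ⟨ν, hν, ?_⟩
    rwa [Stmt12Aux.opNorm_sub_comm] at hle
  · intro ν hν
    exact Stmt12Aux.one_sided N hN M hM A₁ A₂ h₁ h₂ ν hν
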